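/- (Separation theorem) Let M be a real d-by-n matrix, let P_left be a d-by-d orthogonal projection matrix of rank r₁, and let P_right be an n-by-n orthogonal projection matrix of rank r₂. Set t = (d − r₁) + (n − r₂). Then for every index j (with singular values listed in non-increasing order and defined to be 0 beyond the rank), σ_{j+t}(M) ≤ σ_j(P_left · M · P_right) ≤ σ_j(M), where σ_j(·) denotes the j-th largest singular value. -/

import Mathlib

open Matrix

/-- The Gram matrix `AᵀA` of a real matrix is Hermitian (symmetric). -/
theorem transpose_mul_self_isHermitian {d n : ℕ} (A : Matrix (Fin d) (Fin n) ℝ) :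
    (Aᵀ * A).IsHermitian := by
  rw [← Matrix.conjTranspose_eq_transpose_of_trivial]
  exact Matrix.isHermitian_conjTranspose_mul_self A

/-- The `j`-th largest singular value (0-indexed) of a real `d × n` matrix `A`:
the square root of the `j`-th largest eigenvalue of `AᵀA`, listed in non-increasing
order, and defined to be `0` for `j ≥ n` (i.e. beyond the rank). -/
noncomputable def singularValue {d n : ℕ} (A : Matrix (Fin d) (Fin n) ℝ) (j : ℕ) : ℝ :=
  if h : j < n then
    Real.sqrt ((transpose_mul_self_isHermitian A).eigenvalues
      (Tuple.sort (transpose_mul_self_isHermitian A).eigenvalues (Fin.rev ⟨j, h⟩)))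
  else 0

noncomputable section SepAux
namespace SepAux

open Module Submodule LinearMap
open scoped RealInnerProductSpace

abbrev E (n : ℕ) := EuclideanSpace ℝ (Fin n)

variable {n : ℕ} {A : Matrix (Fin n) (Fin n) ℝ}

/-- the permutation giving descending order of eigenvalues -/
def sp (hA : A.IsHermitian) : Equiv.Perm (Fin n) :=
  Fin.revPerm.trans (Tuple.sort hA.eigenvalues)

/-- eigenvalues in descending order -/
def μ (hA : A.IsHermitian) (j : Fin n) : ℝ := hA.eigenvalues (sp hA j)

/-- orthonormal eigenbasis, reindexed to match descending eigenvalues -/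
def ob (hA : A.IsHermitian) : OrthonormalBasis (Fin n) ℝ (E n) :=
  hA.eigenvectorBasis.reindex (sp hA).symm

lemma ob_apply (hA : A.IsHermitian) (j : Fin n) :
    ob hA j = hA.eigenvectorBasis (sp hA j) := by
  simp [ob, OrthonormalBasis.reindex_apply]

lemma μ_antitone (hA : A.IsHermitian) : Antitone (μ hA) := by
  intro i j hij
  exact Tuple.monotone_sort hA.eigenvalues (Fin.rev_le_rev.mpr hij)

lemma apply_ob (hA : A.IsHermitian) (j : Fin n) :
    toEuclideanLin A (ob hA j) = μ hA j • ob hA j := by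
  have h := hA.mulVec_eigenvectorBasis (sp hA j)
  rw [ob_apply]
  apply (WithLp.equiv 2 _).symm.injective
  simp only [toEuclideanLin_apply]
  rw [h]; rfl

lemma repr_toEuclideanLin (hA : A.IsHermitian) (x : E n) (i : Fin n) :
    (ob hA).repr (toEuclideanLin A x) i = μ hA i * (ob hA).repr x i := by
  rw [OrthonormalBasis.repr_apply_apply, OrthonormalBasis.repr_apply_apply,
    ← (Matrix.isHermitian_iff_isSymmetric.1 hA) (ob hA i) x, apply_ob, inner_smul_left]
  simp [μ]

lemma ray_eq_sum (hA : A.IsHermitian) (x : E n) :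
    ⟪x, toEuclideanLin A x⟫ = ∑ i, μ hA i * ((ob hA).repr x i) ^ 2 := by
  rw [← LinearIsometryEquiv.inner_map_map (ob hA).repr x (toEuclideanLin A x)]
  simp only [PiLp.inner_apply, RCLike.inner_apply, starRingEnd_apply, star_trivial,
    repr_toEuclideanLin]
  exact Finset.sum_congr rfl fun i _ => by ring

lemma inner_self_eq_sum (hA : A.IsHermitian) (x : E n) :
    ⟪x, x⟫ = ∑ i, ((ob hA).repr x i) ^ 2 := by
  rw [← LinearIsometryEquiv.inner_map_map (ob hA).repr x x]
  simp only [PiLp.inner_apply, RCLike.inner_apply, starRingEnd_apply, star_trivial]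
  exact Finset.sum_congr rfl fun i _ => by ring

lemma repr_eq_zero_of_mem_span (hA : A.IsHermitian) {s : Set (Fin n)} {x : E n}
    (hx : x ∈ span ℝ (ob hA '' s)) {i : Fin n} (hi : i ∉ s) :
    (ob hA).repr x i = 0 := by
  rw [OrthonormalBasis.repr_apply_apply]
  induction hx using Submodule.span_induction with
  | mem y hy =>
    obtain ⟨j, hj, rfl⟩ := hy
    have := orthonormal_iff_ite.mp (ob hA).orthonormal i j
    rw [this, if_neg (by rintro rfl; exact hi hj)]
  | zero => exact inner_zero_right _
  | add y z _ _ hy hz => rw [inner_add_right, hy, hz, add_zero]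
  | smul c y _ hy => rw [inner_smul_right, hy, mul_zero]

lemma le_ray_of_mem_span (hA : A.IsHermitian) {s : Set (Fin n)} {c : ℝ}
    (hc : ∀ i ∈ s, c ≤ μ hA i) {x : E n} (hx : x ∈ span ℝ (ob hA '' s)) :
    c * ⟪x, x⟫ ≤ ⟪x, toEuclideanLin A x⟫ := by
  rw [ray_eq_sum hA, inner_self_eq_sum hA, Finset.mul_sum]
  refine Finset.sum_le_sum fun i _ => ?_
  by_cases hi : i ∈ s
  · have := hc i hi
    nlinarith [sq_nonneg ((ob hA).repr x i)]
  · rw [repr_eq_zero_of_mem_span hA hx hi]; simp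

lemma ray_le_of_mem_span (hA : A.IsHermitian) {s : Set (Fin n)} {c : ℝ}
    (hc : ∀ i ∈ s, μ hA i ≤ c) {x : E n} (hx : x ∈ span ℝ (ob hA '' s)) :
    ⟪x, toEuclideanLin A x⟫ ≤ c * ⟪x, x⟫ := by
  rw [ray_eq_sum hA, inner_self_eq_sum hA, Finset.mul_sum]
  refine Finset.sum_le_sum fun i _ => ?_
  by_cases hi : i ∈ s
  · have := hc i hi
    nlinarith [sq_nonneg ((ob hA).repr x i)]
  · rw [repr_eq_zero_of_mem_span hA hx hi]; simp

lemma finrank_span_ob (hA : A.IsHermitian) (s : Set (Fin n)) [Fintype s] :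
    finrank ℝ (span ℝ (ob hA '' s)) = Fintype.card s := by
  rw [Set.image_eq_range]
  exact finrank_span_eq_card
    ((ob hA).orthonormal.linearIndependent.comp Subtype.val Subtype.val_injective)

lemma card_le_set (k : ℕ) (hk : k < n) [Fintype ({i : Fin n | i.val ≤ k} : Set (Fin n))] :
    Fintype.card ({i : Fin n | i.val ≤ k} : Set (Fin n)) = k + 1 := by
  have e : ({i : Fin n | i.val ≤ k} : Set (Fin n)) ≃ Fin (k + 1) :=
    { toFun := fun x => ⟨x.1.val, by have : x.1.val ≤ k := x.2; omega⟩
      invFun := fun y => ⟨⟨y.val, by have := y.isLt; omega⟩,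
        show (⟨y.val, _⟩ : Fin n).val ≤ k from Nat.lt_succ_iff.mp y.isLt⟩
      left_inv := fun x => Subtype.ext (Fin.ext rfl)
      right_inv := fun y => Fin.ext rfl }
  rw [Fintype.card_congr e, Fintype.card_fin]

lemma card_ge_set (k : ℕ) [Fintype ({i : Fin n | k ≤ i.val} : Set (Fin n))] :
    Fintype.card ({i : Fin n | k ≤ i.val} : Set (Fin n)) = n - k := by
  have e : ({i : Fin n | k ≤ i.val} : Set (Fin n)) ≃ Fin (n - k) :=
    { toFun := fun x => ⟨x.1.val - k, by have : k ≤ x.1.val := x.2; have := x.1.isLt; omega⟩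
      invFun := fun y => ⟨⟨y.val + k, by have := y.isLt; omega⟩,
        show k ≤ (⟨y.val + k, _⟩ : Fin n).val from Nat.le_add_left k y.val⟩
      left_inv := fun x => Subtype.ext (Fin.ext (Nat.sub_add_cancel x.2))
      right_inv := fun y => Fin.ext (Nat.add_sub_cancel y.val k) }
  rw [Fintype.card_congr e, Fintype.card_fin]

lemma exists_ne_zero_of_finrank_pos {p : Submodule ℝ (E n)} (h : 0 < finrank ℝ p) :
    ∃ x ∈ p, x ≠ 0 := by
  obtain ⟨x, hx⟩ := finrank_pos_iff_exists_ne_zero.mp h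
  exact ⟨x.1, x.2, fun h0 => hx (Subtype.ext h0)⟩

lemma finrank_E (n : ℕ) : finrank ℝ (E n) = n := by
  simp [finrank_euclideanSpace]

lemma finrank_inf_pos (U W : Submodule ℝ (E n))
    (h : finrank ℝ (E n) < finrank ℝ U + finrank ℝ W) :
    0 < finrank ℝ (U ⊓ W : Submodule ℝ (E n)) := by
  have h1 := Submodule.finrank_sup_add_finrank_inf_eq U W
  have h2 := Submodule.finrank_le (U ⊔ W)
  omega

lemma finrank_inf_ge (U W : Submodule ℝ (E n)) :
    finrank ℝ U + finrank ℝ W ≤ finrank ℝ (E n) + finrank ℝ (U ⊓ W : Submodule ℝ (E n)) := by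
  have h1 := Submodule.finrank_sup_add_finrank_inf_eq U W
  have h2 := Submodule.finrank_le (U ⊔ W)
  omega

/-- Courant-Fischer type: any subspace of dimension ≥ j+1 contains a nonzero vector whose
Rayleigh quotient is at most `μ j`. -/
lemma exists_ray_le (hA : A.IsHermitian) (j : Fin n) (U : Submodule ℝ (E n))
    (hU : j.val + 1 ≤ finrank ℝ U) :
    ∃ x ∈ U, x ≠ 0 ∧ ⟪x, toEuclideanLin A x⟫ ≤ μ hA j * ⟪x, x⟫ := by
  have hW : finrank ℝ (span ℝ (ob hA '' {i : Fin n | j.val ≤ i.val})) = n - j.val := by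
    rw [finrank_span_ob]; exact card_ge_set j.val
  have c12 : finrank ℝ (E n) = n := finrank_E n
  have h4 := j.isLt
  have hlt : finrank ℝ (E n) < finrank ℝ U
      + finrank ℝ (span ℝ (ob hA '' {i : Fin n | j.val ≤ i.val})) := by omega
  have hpos : 0 < finrank ℝ
      ((U ⊓ span ℝ (ob hA '' {i : Fin n | j.val ≤ i.val})) : Submodule ℝ (E n)) :=
    finrank_inf_pos _ _ hlt
  obtain ⟨x, hxm, hx0⟩ := exists_ne_zero_of_finrank_pos hpos
  obtain ⟨hxU, hxW⟩ := Submodule.mem_inf.mp hxm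
  refine ⟨x, hxU, hx0, ray_le_of_mem_span hA (fun i hi => ?_) hxW⟩
  exact μ_antitone hA (show j ≤ i from hi)

lemma le_mu (hA : A.IsHermitian) (j : Fin n) {c : ℝ} (U : Submodule ℝ (E n))
    (hU : j.val + 1 ≤ finrank ℝ U)
    (h : ∀ x ∈ U, c * ⟪x, x⟫ ≤ ⟪x, toEuclideanLin A x⟫) : c ≤ μ hA j := by
  obtain ⟨x, hxU, hx0, hray⟩ := exists_ray_le hA j U hU
  have hpos : (0:ℝ) < ⟪x, x⟫ := by
    rw [real_inner_self_eq_norm_sq]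
    exact pow_pos (norm_pos_iff.mpr hx0) 2
  nlinarith [h x hxU]

lemma mu_le (hA : A.IsHermitian) (j : Fin n) {c : ℝ}
    (h : ∀ U : Submodule ℝ (E n), finrank ℝ U = j.val + 1 →
      ∃ x ∈ U, x ≠ 0 ∧ ⟪x, toEuclideanLin A x⟫ ≤ c * ⟪x, x⟫) : μ hA j ≤ c := by
  obtain ⟨x, hxV, hx0, hray⟩ := h (span ℝ (ob hA '' {i : Fin n | i.val ≤ j.val}))
    (by rw [finrank_span_ob]; exact card_le_set j.val j.isLt)
  have hlow := le_ray_of_mem_span hA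
    (fun i (hi : i.val ≤ j.val) => μ_antitone hA (show i ≤ j from hi)) hxV
  have hpos : (0:ℝ) < ⟪x, x⟫ := by
    rw [real_inner_self_eq_norm_sq]
    exact pow_pos (norm_pos_iff.mpr hx0) 2
  nlinarith

section Rect
variable {d : ℕ}

lemma toEuclideanLin_mul {m k l : ℕ} (X : Matrix (Fin m) (Fin k) ℝ) (Y : Matrix (Fin k) (Fin l) ℝ) :
    toEuclideanLin (X * Y) = (toEuclideanLin X).comp (toEuclideanLin Y) := by
  simp only [toEuclideanLin_eq_toLin]
  exact toLin_mul _ _ _ X Y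

lemma inner_gram (N : Matrix (Fin d) (Fin n) ℝ) (x : E n) :
    ⟪x, toEuclideanLin (Nᵀ * N) x⟫ = ⟪toEuclideanLin N x, toEuclideanLin N x⟫ := by
  rw [toEuclideanLin_mul, LinearMap.comp_apply, ← Matrix.conjTranspose_eq_transpose_of_trivial,
    toEuclideanLin_conjTranspose_eq_adjoint, LinearMap.adjoint_inner_right]

lemma proj_contract {m : ℕ} (P : Matrix (Fin m) (Fin m) ℝ) (hs : Pᵀ = P) (hi : P * P = P)
    (x : E m) :
    ⟪toEuclideanLin P x, toEuclideanLin P x⟫ ≤ ⟪x, x⟫ := by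
  have h1 : ⟪toEuclideanLin P x, toEuclideanLin P x⟫ = ⟪x, toEuclideanLin P x⟫ := by
    have := inner_gram P x
    rw [hs, hi] at this
    exact this.symm
  have h2 : ⟪x, toEuclideanLin P x⟫ ≤ ‖x‖ * ‖toEuclideanLin P x‖ := real_inner_le_norm _ _
  have h3 : ⟪toEuclideanLin P x, toEuclideanLin P x⟫ = ‖toEuclideanLin P x‖ ^ 2 :=
    real_inner_self_eq_norm_sq _
  have h4 : ⟪x, x⟫ = ‖x‖ ^ 2 := real_inner_self_eq_norm_sq _
  have ha : (0:ℝ) ≤ ‖toEuclideanLin P x‖ := norm_nonneg _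
  have hc : (0:ℝ) ≤ ‖x‖ := norm_nonneg _
  have key : ‖toEuclideanLin P x‖ ≤ ‖x‖ := by
    rcases ha.eq_or_lt with h0 | h0
    · rw [← h0]; exact hc
    · have : ‖toEuclideanLin P x‖ * ‖toEuclideanLin P x‖ ≤ ‖x‖ * ‖toEuclideanLin P x‖ := by
        nlinarith
      exact le_of_mul_le_mul_right this h0
  rw [h3, h4]
  exact pow_le_pow_left₀ ha key 2

lemma mu_gram_nonneg (N : Matrix (Fin d) (Fin n) ℝ) (j : Fin n) :
    0 ≤ μ (transpose_mul_self_isHermitian N) j := by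
  set hA := transpose_mul_self_isHermitian N
  have h1 : ⟪ob hA j, toEuclideanLin (Nᵀ * N) (ob hA j)⟫ = μ hA j * ⟪ob hA j, ob hA j⟫ := by
    rw [apply_ob, inner_smul_right]
  have h2 := inner_gram N (ob hA j)
  have h3 : ⟪ob hA j, ob hA j⟫ = 1 := by
    have := orthonormal_iff_ite.mp (ob hA).orthonormal j j
    simpa using this
  have h4 : (0:ℝ) ≤ ⟪toEuclideanLin N (ob hA j), toEuclideanLin N (ob hA j)⟫ :=
    real_inner_self_nonneg
  rw [h1, h3, mul_one] at h2
  linarith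

lemma rank_add_rank_one_sub {m : ℕ} (P : Matrix (Fin m) (Fin m) ℝ) (hi : P * P = P) :
    P.rank + (1 - P).rank = m := by
  have hker : LinearMap.range (1 - P).mulVecLin = LinearMap.ker P.mulVecLin := by
    ext x
    constructor
    · rintro ⟨y, rfl⟩
      simp only [LinearMap.mem_ker, mulVecLin_apply, mulVec_mulVec]
      rw [show P * (1 - P) = 0 by rw [Matrix.mul_sub, Matrix.mul_one, hi, sub_self]]
      simp
    · intro hx
      refine ⟨x, ?_⟩
      simp only [LinearMap.mem_ker, mulVecLin_apply] at hx
      simp [mulVecLin_apply, Matrix.sub_mulVec, Matrix.one_mulVec, hx]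
  have h1 := LinearMap.finrank_range_add_finrank_ker (P.mulVecLin)
  have h2 : finrank ℝ (Fin m → ℝ) = m := by simp
  rw [Matrix.rank, Matrix.rank, hker]
  omega

lemma finrank_ker_toEuclideanLin {m : ℕ} (N : Matrix (Fin m) (Fin n) ℝ) :
    finrank ℝ (LinearMap.ker (toEuclideanLin N)) + N.rank = n := by
  have hker : LinearMap.ker (toEuclideanLin N)
      = Submodule.map (WithLp.linearEquiv 2 ℝ (Fin n → ℝ)).symm.toLinearMap
          (LinearMap.ker N.mulVecLin) := by
    ext x
    rw [Submodule.mem_map_equiv, LinearMap.mem_ker, LinearMap.mem_ker, toEuclideanLin_apply]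
    constructor
    · intro h
      have := congrArg (WithLp.equiv 2 (Fin m → ℝ)) h
      simpa [mulVecLin_apply] using this
    · intro h
      simp only [LinearEquiv.symm_symm, mulVecLin_apply] at h ⊢
      rw [show ((WithLp.linearEquiv 2 ℝ (Fin n → ℝ)) x) = (WithLp.equiv 2 (Fin n → ℝ)) x from rfl] at h
      rw [show x.ofLp = (WithLp.equiv 2 (Fin n → ℝ)) x from rfl, h]
      simp
  have h1 := LinearMap.finrank_range_add_finrank_ker N.mulVecLin
  have h2 : finrank ℝ (Fin n → ℝ) = n := by simp
  rw [hker, LinearEquiv.finrank_map_eq, Matrix.rank]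
  omega

lemma finrank_comap_ge (g : E n →ₗ[ℝ] E n) (W : Submodule ℝ (E n)) :
    finrank ℝ W ≤ finrank ℝ (W.comap g) := by
  have h1 : W.comap g = LinearMap.ker (W.mkQ.comp g) := by
    ext x
    simp [Submodule.Quotient.mk_eq_zero]
  have h2 := LinearMap.finrank_range_add_finrank_ker (W.mkQ.comp g)
  have h3 : finrank ℝ (LinearMap.range (W.mkQ.comp g)) ≤ finrank ℝ (E n ⧸ W) :=
    Submodule.finrank_le _
  have h4 := Submodule.finrank_quotient_add_finrank W
  have h5 := finrank_E n
  rw [h1]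
  omega

end Rect
end SepAux
end SepAux

section Main
open SepAux Module Submodule
open scoped RealInnerProductSpace

variable {d n : ℕ}

/-- Upper bound: μ_j((PMQ)ᵀ(PMQ)) ≤ μ_j(MᵀM). -/
lemma mu_pmq_le_mu (M : Matrix (Fin d) (Fin n) ℝ)
    (P : Matrix (Fin d) (Fin d) ℝ) (Q : Matrix (Fin n) (Fin n) ℝ)
    (hPsymm : Pᵀ = P) (hPidem : P * P = P)
    (hQsymm : Qᵀ = Q) (hQidem : Q * Q = Q) (j : Fin n) :
    μ (transpose_mul_self_isHermitian (P * M * Q)) j ≤ μ (transpose_mul_self_isHermitian M) j := by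
  set hA := transpose_mul_self_isHermitian M
  set hB := transpose_mul_self_isHermitian (P * M * Q)
  refine mu_le hB j fun U hU => ?_
  have hW : finrank ℝ (span ℝ (ob hA '' {i : Fin n | j.val ≤ i.val})) = n - j.val := by
    rw [finrank_span_ob]; exact card_ge_set j.val
  have hW' : n - j.val ≤ finrank ℝ
      (Submodule.comap (toEuclideanLin Q) (span ℝ (ob hA '' {i : Fin n | j.val ≤ i.val}))) := by
    rw [← hW]
    exact finrank_comap_ge (toEuclideanLin Q) (span ℝ (ob hA '' {i : Fin n | j.val ≤ i.val}))
  have h3 : finrank ℝ (E n) = n := finrank_E n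
  have h4 := j.isLt
  have hlt : finrank ℝ (E n) < finrank ℝ U + finrank ℝ
      (Submodule.comap (toEuclideanLin Q) (span ℝ (ob hA '' {i : Fin n | j.val ≤ i.val}))) := by
    omega
  have hpos : 0 < finrank ℝ
      ((U ⊓ Submodule.comap (toEuclideanLin Q) (span ℝ (ob hA '' {i : Fin n | j.val ≤ i.val})))
        : Submodule ℝ (E n)) :=
    finrank_inf_pos _ _ hlt
  obtain ⟨x, hxm, hx0⟩ := exists_ne_zero_of_finrank_pos hpos
  obtain ⟨hxU, hxW'⟩ := Submodule.mem_inf.mp hxm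
  refine ⟨x, hxU, hx0, ?_⟩
  set y := toEuclideanLin Q x with hy
  have hyW : y ∈ span ℝ (ob hA '' {i : Fin n | j.val ≤ i.val}) := Submodule.mem_comap.mp hxW'
  have e1 : ⟪x, toEuclideanLin ((P * M * Q)ᵀ * (P * M * Q)) x⟫
      = ⟪toEuclideanLin (P * M * Q) x, toEuclideanLin (P * M * Q) x⟫ := inner_gram _ x
  have e2 : toEuclideanLin (P * M * Q) x = toEuclideanLin P (toEuclideanLin M y) := by
    rw [toEuclideanLin_mul (P * M) Q, toEuclideanLin_mul P M]
    rfl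
  have e3 : ⟪toEuclideanLin P (toEuclideanLin M y), toEuclideanLin P (toEuclideanLin M y)⟫
      ≤ ⟪toEuclideanLin M y, toEuclideanLin M y⟫ := proj_contract P hPsymm hPidem _
  have e4 : ⟪toEuclideanLin M y, toEuclideanLin M y⟫ ≤ μ hA j * ⟪y, y⟫ := by
    rw [← inner_gram M y]
    exact ray_le_of_mem_span hA
      (fun i (hi : j.val ≤ i.val) => μ_antitone hA (show j ≤ i from hi)) hyW
  have e5 : ⟪y, y⟫ ≤ ⟪x, x⟫ := proj_contract Q hQsymm hQidem x
  have e6 : 0 ≤ μ hA j := mu_gram_nonneg M j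
  calc ⟪x, toEuclideanLin ((P * M * Q)ᵀ * (P * M * Q)) x⟫
      ≤ μ hA j * ⟪y, y⟫ := by rw [e1, e2]; linarith
    _ ≤ μ hA j * ⟪x, x⟫ := by nlinarith

/-- Lower bound: μ_{j+t}(MᵀM) ≤ μ_j((PMQ)ᵀ(PMQ)). -/
lemma mu_le_mu_pmq (M : Matrix (Fin d) (Fin n) ℝ)
    (P : Matrix (Fin d) (Fin d) ℝ) (Q : Matrix (Fin n) (Fin n) ℝ)
    (hPsymm : Pᵀ = P) (hPidem : P * P = P)
    (hQsymm : Qᵀ = Q) (hQidem : Q * Q = Q)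
    (t : ℕ) (ht : t = (d - P.rank) + (n - Q.rank)) (j : Fin n) (hjt : j.val + t < n) :
    μ (transpose_mul_self_isHermitian M) ⟨j.val + t, hjt⟩
      ≤ μ (transpose_mul_self_isHermitian (P * M * Q)) j := by
  set hA := transpose_mul_self_isHermitian M with hAdef
  set hB := transpose_mul_self_isHermitian (P * M * Q) with hBdef
  have hV : finrank ℝ (span ℝ (ob hA '' {i : Fin n | i.val ≤ j.val + t})) = j.val + t + 1 := by
    rw [finrank_span_ob]; exact card_le_set _ hjt
  have c1 : finrank ℝ (LinearMap.ker (toEuclideanLin (1 - Q))) + (1 - Q).rank = n :=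
    finrank_ker_toEuclideanLin (1 - Q)
  have c2 : Q.rank + (1 - Q).rank = n := rank_add_rank_one_sub Q hQidem
  have c3 : finrank ℝ (LinearMap.ker (toEuclideanLin ((1 - P) * M))) + ((1 - P) * M).rank = n :=
    finrank_ker_toEuclideanLin ((1 - P) * M)
  have c4 : ((1 - P) * M).rank ≤ (1 - P).rank := Matrix.rank_mul_le_left _ _
  have c5 : P.rank + (1 - P).rank = d := rank_add_rank_one_sub P hPidem
  have c6 : Q.rank ≤ n := le_trans (Matrix.rank_le_card_width Q) (by simp)
  have c7 : P.rank ≤ d := le_trans (Matrix.rank_le_card_width P) (by simp)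
  have c8 : finrank ℝ (LinearMap.ker (toEuclideanLin (1 - Q)))
        + finrank ℝ (LinearMap.ker (toEuclideanLin ((1 - P) * M)))
      ≤ finrank ℝ (E n) + finrank ℝ
        ((LinearMap.ker (toEuclideanLin (1 - Q)) ⊓ LinearMap.ker (toEuclideanLin ((1 - P) * M)))
          : Submodule ℝ (E n)) :=
    finrank_inf_ge _ _
  have c10 : finrank ℝ (span ℝ (ob hA '' {i : Fin n | i.val ≤ j.val + t}))
        + finrank ℝ
          ((LinearMap.ker (toEuclideanLin (1 - Q)) ⊓ LinearMap.ker (toEuclideanLin ((1 - P) * M)))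
            : Submodule ℝ (E n))
      ≤ finrank ℝ (E n) + finrank ℝ
        ((span ℝ (ob hA '' {i : Fin n | i.val ≤ j.val + t})
          ⊓ (LinearMap.ker (toEuclideanLin (1 - Q)) ⊓ LinearMap.ker (toEuclideanLin ((1 - P) * M))))
          : Submodule ℝ (E n)) :=
    finrank_inf_ge _ _
  have c12 : finrank ℝ (E n) = n := finrank_E n
  have hUfin : j.val + 1 ≤ finrank ℝ
      ((span ℝ (ob hA '' {i : Fin n | i.val ≤ j.val + t})
        ⊓ (LinearMap.ker (toEuclideanLin (1 - Q)) ⊓ LinearMap.ker (toEuclideanLin ((1 - P) * M))))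
        : Submodule ℝ (E n)) := by
    omega
  refine le_mu hB j _ hUfin fun x hx => ?_
  obtain ⟨hxV, hxS⟩ := Submodule.mem_inf.mp hx
  obtain ⟨hxQ', hxPM'⟩ := Submodule.mem_inf.mp hxS
  have hxQ : toEuclideanLin (1 - Q) x = 0 := LinearMap.mem_ker.mp hxQ'
  have hxPM : toEuclideanLin ((1 - P) * M) x = 0 := LinearMap.mem_ker.mp hxPM'
  have hQx : toEuclideanLin Q x = x := by
    have hsub : toEuclideanLin (1 - Q) x
        = toEuclideanLin (1 : Matrix (Fin n) (Fin n) ℝ) x - toEuclideanLin Q x := by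
      rw [map_sub]; rfl
    have hone : toEuclideanLin (1 : Matrix (Fin n) (Fin n) ℝ) x = x := by
      rw [toEuclideanLin_eq_toLin, toLin_one]; rfl
    rw [hsub, hone] at hxQ
    exact (sub_eq_zero.mp hxQ).symm
  have hPMx : toEuclideanLin P (toEuclideanLin M x) = toEuclideanLin M x := by
    rw [toEuclideanLin_mul] at hxPM
    have hsub : toEuclideanLin (1 - P) (toEuclideanLin M x)
        = toEuclideanLin (1 : Matrix (Fin d) (Fin d) ℝ) (toEuclideanLin M x)
          - toEuclideanLin P (toEuclideanLin M x) := by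
      rw [map_sub]; rfl
    have hone : toEuclideanLin (1 : Matrix (Fin d) (Fin d) ℝ) (toEuclideanLin M x)
        = toEuclideanLin M x := by
      rw [toEuclideanLin_eq_toLin, toLin_one]; rfl
    have h0 : toEuclideanLin (1 - P) (toEuclideanLin M x) = 0 := hxPM
    rw [hsub, hone] at h0
    exact (sub_eq_zero.mp h0).symm
  have e2 : toEuclideanLin (P * M * Q) x = toEuclideanLin M x := by
    rw [toEuclideanLin_mul (P * M) Q, toEuclideanLin_mul P M]
    show toEuclideanLin P (toEuclideanLin M (toEuclideanLin Q x)) = _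
    rw [hQx, hPMx]
  have e1 : ⟪x, toEuclideanLin ((P * M * Q)ᵀ * (P * M * Q)) x⟫
      = ⟪x, toEuclideanLin (Mᵀ * M) x⟫ := by
    rw [inner_gram _ x, e2, ← inner_gram M x]
  rw [e1]
  exact le_ray_of_mem_span hA
    (fun i (hi : i.val ≤ j.val + t) =>
      μ_antitone hA (show i ≤ (⟨j.val + t, hjt⟩ : Fin n) from hi)) hxV

end Main

lemma singularValue_lt {d n : ℕ} (A : Matrix (Fin d) (Fin n) ℝ) (k : ℕ) (h : k < n) :
    singularValue A k = Real.sqrt (SepAux.μ (transpose_mul_self_isHermitian A) ⟨k, h⟩) := by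
  rw [singularValue, dif_pos h]
  rfl

lemma singularValue_nonneg {d n : ℕ} (A : Matrix (Fin d) (Fin n) ℝ) (k : ℕ) :
    0 ≤ singularValue A k := by
  rw [singularValue]
  split
  · exact Real.sqrt_nonneg _
  · exact le_refl 0

/-- **Separation theorem.** For a real `d × n` matrix `M` and orthogonal
projection matrices `P` (size `d`, rank `r₁`) and `Q` (size `n`, rank `r₂`), with
`t = (d - r₁) + (n - r₂)`, every singular value satisfies
`σ_{j+t}(M) ≤ σ_j(P * M * Q) ≤ σ_j(M)`. -/
theorem separation_theorem {d n : ℕ} (M : Matrix (Fin d) (Fin n) ℝ)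
    (P : Matrix (Fin d) (Fin d) ℝ) (Q : Matrix (Fin n) (Fin n) ℝ)
    (hPsymm : Pᵀ = P) (hPidem : P * P = P)
    (hQsymm : Qᵀ = Q) (hQidem : Q * Q = Q)
    (t : ℕ) (ht : t = (d - P.rank) + (n - Q.rank)) (j : ℕ) :
    singularValue M (j + t) ≤ singularValue (P * M * Q) j ∧
      singularValue (P * M * Q) j ≤ singularValue M j := by
  constructor
  · by_cases hj : j < n
    · by_cases hjt : j + t < n
      · rw [singularValue_lt M (j + t) hjt, singularValue_lt (P * M * Q) j hj]
        exact Real.sqrt_le_sqrt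
          (mu_le_mu_pmq M P Q hPsymm hPidem hQsymm hQidem t ht ⟨j, hj⟩ hjt)
      · rw [singularValue, dif_neg hjt]
        exact singularValue_nonneg _ _
    · have hjt : ¬ (j + t < n) := by omega
      rw [singularValue, dif_neg hjt]
      exact singularValue_nonneg _ _
  · by_cases hj : j < n
    · rw [singularValue_lt (P * M * Q) j hj, singularValue_lt M j hj]
      exact Real.sqrt_le_sqrt (mu_pmq_le_mu M P Q hPsymm hPidem hQsymm hQidem ⟨j, hj⟩)
    · rw [singularValue, dif_neg hj, singularValue, dif_neg hj]
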